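/- In the BP encoding of a binary tree, for any node v, the subtree rooted at v corresponds exactly to the half-open interval [open(v), enclose_close(v)) on the BP sequence, where open(v) is the opening parenthesis of v and enclose_close(v) is the closing parenthesis whose interval tightly encloses the interval of v's closing parenthesis. -/

import Mathlib

/-- A binary tree: `leaf` is the empty tree; each internal node has an
optional left and an optional right subtree (possibly `leaf`). -/
inductive BinTree : Type where
  | leaf : BinTree
  | node : BinTree → BinTree → BinTree
deriving DecidableEq

namespace BinTree

/-- Number of nodes of a binary tree. -/
def size : BinTree → ℕ
  | leaf => 0
  | node l r => l.size + r.size + 1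

/-- BalancedBP-parenthesis encoding of binary trees:
`BP(empty) = ε`, `BP(t) = '(' ++ BP(t_l) ++ ')' ++ BP(t_r)`.
`true` is an opening parenthesis, `false` a closing one. -/
def bp : BinTree → List Bool
  | leaf => []
  | node l r => true :: (l.bp ++ false :: r.bp)

/-- The subtree reached by following a path (`false` = left, `true` = right). -/
def subtreeAt : BinTree → List Bool → Option BinTree
  | t, [] => some t
  | leaf, _ :: _ => none
  | node l _, false :: p => subtreeAt l p
  | node _ r, true :: p => subtreeAt r p

/-- A path identifies an actual node of the tree (not an empty slot). -/
def ValidPath (t : BinTree) (p : List Bool) : Prop :=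
  ∃ l r, subtreeAt t p = some (node l r)

/-- Index (0-based) of the opening parenthesis of the node at a path. -/
def openIdx : BinTree → List Bool → Option ℕ
  | leaf, _ => none
  | node _ _, [] => some 0
  | node l _, false :: p => (openIdx l p).map (· + 1)
  | node l r, true :: p => (openIdx r p).map (· + (l.bp.length + 2))

/-- Index (0-based) of the closing parenthesis of the node at a path. -/
def closeIdx : BinTree → List Bool → Option ℕ
  | leaf, _ => none
  | node l _, [] => some (l.bp.length + 1)
  | node l _, false :: p => (closeIdx l p).map (· + 1)
  | node l r, true :: p => (closeIdx r p).map (· + (l.bp.length + 2))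

/-- Inorder rank (0-based) of the node at a path. -/
def inorderIdx : BinTree → List Bool → Option ℕ
  | leaf, _ => none
  | node l _, [] => some l.size
  | node l _, false :: p => inorderIdx l p
  | node l r, true :: p => (inorderIdx r p).map (· + (l.size + 1))

end BinTree

/-- A sequence of parentheses (`true` = '(') is balanced: equally many opening
and closing parentheses, and every prefix has at least as many opening ones. -/
def BalancedBP (s : List Bool) : Prop :=
  s.count true = s.count false ∧
  ∀ k, (s.take k).count false ≤ (s.take k).count true

/-- `excess s k`: number of opening minus closing parentheses among the first `k` symbols. -/
def excess (s : List Bool) (k : ℕ) : ℤ :=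
  ((s.take k).count true : ℤ) - ((s.take k).count false : ℤ)

/-- `IsMatch s i j`: positions `i < j` form a matching pair of parentheses
(the standard stack-based matching). -/
def IsMatch (s : List Bool) (i j : ℕ) : Prop :=
  i < j ∧ j < s.length ∧ s[i]? = some true ∧ s[j]? = some false ∧
  excess s (j + 1) = excess s i ∧
  ∀ k, i < k → k ≤ j → excess s i < excess s k

/-- `EnclosePair s i v j`: `j` is the closing parenthesis whose matching pair
tightly encloses the matching pair `(i, v)`. -/
def EnclosePair (s : List Bool) (i v j : ℕ) : Prop :=
  (∃ i', IsMatch s i' j ∧ i' < i ∧ v < j) ∧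
  ∀ i'' j'', IsMatch s i'' j'' → i'' < i → v < j'' → j ≤ j''

/-- Longest common prefix of two paths. -/
def lcp : List Bool → List Bool → List Bool
  | a :: as, b :: bs => if a = b then a :: lcp as bs else []
  | _, _ => []

/-- BP encoding where each parenthesis is labelled by the subtree rooted at its node. -/
def BinTree.bpL : BinTree → List (Bool × BinTree)
  | .leaf => []
  | .node l r => (true, .node l r) :: (l.bpL ++ (false, .node l r) :: r.bpL)


namespace BPAux
open BinTree

lemma bp_eq_map_fst : ∀ u : BinTree, u.bp = u.bpL.map Prod.fst
  | .leaf => rfl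
  | .node l r => by
    simp [BinTree.bp, BinTree.bpL, bp_eq_map_fst l, bp_eq_map_fst r]

lemma bpL_length (u : BinTree) : u.bpL.length = u.bp.length := by
  rw [bp_eq_map_fst]; simp

lemma excess_zero (s : List Bool) : excess s 0 = 0 := by simp [excess]

lemma excess_append (x y : List Bool) (m : ℕ) :
    excess (x ++ y) (x.length + m) = excess x x.length + excess y m := by
  simp [excess, List.take_append, List.count_append, List.take_of_length_le (Nat.le_add_right x.length m)]
  ring

lemma excess_append_left (x y : List Bool) (m : ℕ) (h : m ≤ x.length) :
    excess (x ++ y) m = excess x m := by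
  simp [excess, List.take_append_of_le_length h]

lemma excess_cons (b : Bool) (xs : List Bool) (k : ℕ) :
    excess (b :: xs) (k+1) = (if b then 1 else -1) + excess xs k := by
  cases b <;> simp [excess, List.count_cons] <;> ring

lemma excess_succ (s : List Bool) (a : ℕ) (b : Bool) (h : s[a]? = some b) :
    excess s (a+1) = excess s a + (if b then 1 else -1) := by
  have ht := List.take_succ (l := s) (i := a)
  rw [excess, excess, ht, h]
  cases b <;> simp [List.count_append] <;> ring

lemma bp_count_true : ∀ u : BinTree, u.bp.count true = u.size
  | .leaf => rfl
  | .node l r => by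
    simp [BinTree.bp, BinTree.size, List.count_append, List.count_cons,
      bp_count_true l, bp_count_true r]

lemma bp_count_false : ∀ u : BinTree, u.bp.count false = u.size
  | .leaf => rfl
  | .node l r => by
    simp [BinTree.bp, BinTree.size, List.count_append, List.count_cons,
      bp_count_false l, bp_count_false r]
    omega

lemma excess_bp_len (u : BinTree) : excess u.bp u.bp.length = 0 := by
  simp [excess, List.take_length, bp_count_true, bp_count_false]

lemma excess_bp_nonneg : ∀ (u : BinTree) (k : ℕ), 0 ≤ excess u.bp k
  | .leaf, k => by simp [BinTree.bp, excess]
  | .node l r, 0 => by simp [excess]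
  | .node l r, (k+1) => by
    rw [show (BinTree.node l r).bp = true :: (l.bp ++ false :: r.bp) from rfl,
        excess_cons]
    rcases le_or_gt k l.bp.length with h | h
    · rw [excess_append_left _ _ _ h]
      have := excess_bp_nonneg l k
      simp only [if_pos]
      linarith
    · obtain ⟨m, rfl⟩ : ∃ m, k = l.bp.length + (m+1) := ⟨k - l.bp.length - 1, by omega⟩
      rw [excess_append, excess_bp_len, excess_cons]
      have := excess_bp_nonneg r m
      norm_num
      linarith


lemma struct : ∀ (p : List Bool) (T u : BinTree) (i : ℕ),
    BinTree.subtreeAt T p = some u → u ≠ .leaf → BinTree.openIdx T p = some i →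
    ∃ A B, T.bpL = A ++ u.bpL ++ B ∧ A.length = i ∧
      (∀ a b, B = a :: b → a.1 = false)
  | [], T, u, i, hu, hne, hi => by
    cases T with
    | leaf => simp [BinTree.openIdx] at hi
    | node l r =>
      simp only [BinTree.subtreeAt, Option.some.injEq] at hu
      simp only [BinTree.openIdx, Option.some.injEq] at hi
      exact ⟨[], [], by simp [hu], by simp [hi], by simp⟩
  | (false :: p), T, u, i, hu, hne, hi => by
    cases T with
    | leaf => simp [BinTree.openIdx] at hi
    | node l r =>
      simp only [BinTree.subtreeAt] at hu
      simp only [BinTree.openIdx, Option.map_eq_some_iff] at hi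
      obtain ⟨i', hi', rfl⟩ := hi
      obtain ⟨A, B, hA, hlen, hB⟩ := struct p l u i' hu hne hi'
      refine ⟨(true, .node l r) :: A, B ++ (false, .node l r) :: r.bpL,
        by simp [BinTree.bpL, hA], by simp [hlen], ?_⟩
      intro a b h
      cases B with
      | nil => simp at h; exact h.1.symm ▸ rfl
      | cons x xs => simp at h; exact h.1 ▸ hB x xs rfl
  | (true :: p), T, u, i, hu, hne, hi => by
    cases T with
    | leaf => simp [BinTree.openIdx] at hi
    | node l r =>
      simp only [BinTree.subtreeAt] at hu
      simp only [BinTree.openIdx, Option.map_eq_some_iff] at hi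
      obtain ⟨i', hi', rfl⟩ := hi
      obtain ⟨A, B, hA, hlen, hB⟩ := struct p r u i' hu hne hi'
      refine ⟨(true, .node l r) :: (l.bpL ++ (false, .node l r) :: A), B,
        by simp [BinTree.bpL, hA], by simp [hlen, bpL_length]; omega, hB⟩

lemma close_eq : ∀ (p : List Bool) (T ul ur : BinTree) (i : ℕ),
    BinTree.subtreeAt T p = some (.node ul ur) → BinTree.openIdx T p = some i →
    BinTree.closeIdx T p = some (i + ul.bp.length + 1)
  | [], T, ul, ur, i, hu, hi => by
    cases T with
    | leaf => simp [BinTree.openIdx] at hi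
    | node l r =>
      simp only [BinTree.subtreeAt, Option.some.injEq] at hu
      simp only [BinTree.openIdx, Option.some.injEq] at hi
      cases hu
      simp [BinTree.closeIdx, ← hi]
  | (false :: p), T, ul, ur, i, hu, hi => by
    cases T with
    | leaf => simp [BinTree.openIdx] at hi
    | node l r =>
      simp only [BinTree.subtreeAt] at hu
      simp only [BinTree.openIdx, Option.map_eq_some_iff] at hi
      obtain ⟨i', hi', rfl⟩ := hi
      have := close_eq p l ul ur i' hu hi'
      simp [BinTree.closeIdx, this]
      omega
  | (true :: p), T, ul, ur, i, hu, hi => by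
    cases T with
    | leaf => simp [BinTree.openIdx] at hi
    | node l r =>
      simp only [BinTree.subtreeAt] at hu
      simp only [BinTree.openIdx, Option.map_eq_some_iff] at hi
      obtain ⟨i', hi', rfl⟩ := hi
      have := close_eq p r ul ur i' hu hi'
      simp [BinTree.closeIdx, this]
      omega

lemma exists_match (s : List Bool) (m : ℕ) (hm : m < s.length)
    (hfalse : s[m]? = some false) (hc : 0 ≤ excess s (m+1)) :
    ∃ a, IsMatch s a m ∧ excess s a = excess s (m+1) := by
  set c := excess s (m+1) with hcdef
  have hP0 : excess s 0 ≤ c := by rw [excess_zero]; exact hc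
  set a := Nat.findGreatest (fun k => excess s k ≤ c) m with ha
  have hspec : excess s a ≤ c :=
    Nat.findGreatest_spec (P := fun k => excess s k ≤ c) (Nat.zero_le m) hP0
  have hgreat : ∀ k, a < k → k ≤ m → c < excess s k := by
    intro k h1 h2
    have := Nat.findGreatest_is_greatest (P := fun k => excess s k ≤ c) h1 h2
    exact lt_of_not_ge this
  have hale : a ≤ m := Nat.findGreatest_le m
  have hsm : excess s m = c + 1 := by
    have := excess_succ s m false hfalse
    simp at this
    linarith
  have ham : a < m := by
    rcases lt_or_eq_of_le hale with h | h
    · exact h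
    · exfalso; rw [h] at hspec; linarith
  have h1 : c < excess s (a+1) := hgreat (a+1) (by omega) (by omega)
  obtain ⟨b, hb⟩ : ∃ b, s[a]? = some b := by
    have hlt : a < s.length := by omega
    exact ⟨s[a], List.getElem?_eq_getElem hlt⟩
  have hstep := excess_succ s a b hb
  have hbtrue : b = true := by
    cases b
    · simp at hstep; linarith
    · rfl
  subst hbtrue
  simp at hstep
  have hac : excess s a = c := by linarith
  refine ⟨a, ⟨ham, hm, hb, hfalse, by rw [hac], ?_⟩, hac⟩
  intro k h1 h2
  rw [hac]; exact hgreat k h1 h2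

end BPAux

open BPAux

/-- in the BP encoding (with a sentinel pair of enclosing
parentheses, i.e. working inside `node t leaf`), the subtree rooted at a node
`v` corresponds exactly to the half-open interval `[open v, encloseClose v)`. -/
theorem subtree_eq_interval (t : BinTree) (p : List Bool) (u : BinTree)
    (hu : BinTree.subtreeAt (BinTree.node t .leaf) p = some u) (hne : u ≠ .leaf)
    (i v j : ℕ)
    (hi : BinTree.openIdx (.node t .leaf) p = some i)
    (hv : BinTree.closeIdx (.node t .leaf) p = some v)
    (hj : EnclosePair (BinTree.node t .leaf).bp i v j) :
    (((BinTree.node t .leaf).bpL.drop i).take (j - i)) = u.bpL := by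
  classical
  cases p with
  | nil =>
    simp only [BinTree.openIdx, Option.some.injEq] at hi
    obtain ⟨⟨i', hm', hi', hv'⟩, _⟩ := hj
    omega
  | cons b p' =>
    cases b with
    | true =>
      cases p' with
      | nil =>
        simp only [BinTree.subtreeAt, Option.some.injEq] at hu
        exact absurd hu.symm hne
      | cons c q => simp [BinTree.subtreeAt] at hu
    | false =>
      simp only [BinTree.subtreeAt] at hu
      simp only [BinTree.openIdx, Option.map_eq_some_iff] at hi
      obtain ⟨i', hi', rfl⟩ := hi
      obtain ⟨ul, ur, rfl⟩ : ∃ ul ur, u = .node ul ur := by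
        cases u with
        | leaf => exact absurd rfl hne
        | node a b => exact ⟨a, b, rfl⟩
      set u := BinTree.node ul ur with hud
      -- structure
      obtain ⟨A', B', hA', hlenA', hB'⟩ := struct p' t u i' hu hne hi'
      -- close index
      have hclose := close_eq p' t ul ur i' hu hi'
      simp only [BinTree.closeIdx, hclose, Option.map_eq_some_iff, Option.some.injEq] at hv
      obtain ⟨v0, hv0, hveq⟩ := hv
      have hv_eq : v = i' + ul.bp.length + 2 := by omega
      set T := BinTree.node t BinTree.leaf with hT
      set i := i' + 1 with hidef
      set s := T.bp with hs
      set L := u.bp.length with hL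
      have hLval : L = ul.bp.length + ur.bp.length + 2 := by
        simp [hL, hud, BinTree.bp]
        omega
      -- decomposition of bpL
      set X : List (Bool × BinTree) := (true, T) :: A' with hX
      set Bfull : List (Bool × BinTree) := B' ++ [(false, T)] with hBfull
      have hbpL : T.bpL = X ++ u.bpL ++ Bfull := by
        simp [hT, BinTree.bpL, hA', hX, hBfull]
      have hXlen : X.length = i := by simp [hX, hlenA', hidef]
      -- decomposition of s
      set Xb : List Bool := X.map Prod.fst with hXb
      set Bb : List Bool := Bfull.map Prod.fst with hBb
      have hsdec : s = Xb ++ (u.bp ++ Bb) := by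
        rw [hs, bp_eq_map_fst, hbpL, bp_eq_map_fst u]
        simp [hXb, hBb]
      have hXblen : Xb.length = i := by simp [hXb, hXlen]
      have hslen : s.length = i + L + Bb.length := by
        rw [hsdec]; simp [hXblen, ← hL]; omega
      have hBblen : 1 ≤ Bb.length := by simp [hBb, hBfull]
      -- e := excess s i
      set e := excess s i with he
      have key : ∀ m, m ≤ L → excess s (i + m) = e + excess u.bp m := by
        intro m hm
        have h1 : excess s (i + m) = excess Xb Xb.length + excess (u.bp ++ Bb) m := by
          rw [hsdec, ← hXblen, excess_append]
        have h2 : excess (u.bp ++ Bb) m = excess u.bp m := excess_append_left _ _ _ hm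
        have h3 : e = excess Xb Xb.length := by
          rw [he, hsdec, ← hXblen]
          have := excess_append Xb (u.bp ++ Bb) 0
          rw [excess_zero] at this
          simpa using this
        rw [h1, h2, ← h3]
      -- e ≥ 1
      have hAfst : t.bp = A'.map Prod.fst ++ (u.bp ++ B'.map Prod.fst) := by
        rw [bp_eq_map_fst t, hA', bp_eq_map_fst u]; simp
      have hi'le : i' ≤ (A'.map Prod.fst (α := Bool × BinTree)).length := by
        simp [hlenA']
      have he1 : 1 ≤ e := by
        have h3 : e = excess Xb Xb.length := by
          rw [he, hsdec, ← hXblen]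
          have := excess_append Xb (u.bp ++ Bb) 0
          rw [excess_zero] at this
          simpa using this
        have hXbc : Xb = true :: A'.map Prod.fst := by simp [hXb, hX]
        have h4 : excess Xb Xb.length = 1 + excess (A'.map Prod.fst) i' := by
          rw [hXbc]
          have : (true :: A'.map (Prod.fst (α := Bool) (β := BinTree))).length
              = i' + 1 := by simp [hlenA']
          rw [this, excess_cons]
          simp [hlenA']
        have h5 : excess (A'.map Prod.fst) i' = excess t.bp i' := by
          rw [hAfst, excess_append_left _ _ _ hi'le]
        have h6 := excess_bp_nonneg t i'
        rw [h3, h4, h5]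
        -- need excess t.bp i' computed on t.bp; h5 gives map version
        linarith
      -- s[i+L]? = false
      have hBbhead : ∃ tl, Bb = false :: tl := by
        cases B' with
        | nil => exact ⟨[], by simp [hBb, hBfull]⟩
        | cons x xs =>
          refine ⟨xs.map Prod.fst ++ [false], ?_⟩
          have hx := hB' x xs rfl
          simp [hBb, hBfull, hx]
      obtain ⟨tl, htl⟩ := hBbhead
      have hfalse : s[i + L]? = some false := by
        rw [hsdec]
        have h1 : (Xb ++ (u.bp ++ Bb))[i + L]? = (u.bp ++ Bb)[(i+L) - Xb.length]? :=
          List.getElem?_append_right (by omega)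
        rw [h1, hXblen]
        have : (i + L) - i = L := by omega
        rw [this]
        have h2 : (u.bp ++ Bb)[L]? = Bb[L - u.bp.length]? :=
          List.getElem?_append_right (by omega)
        rw [h2, ← hL, Nat.sub_self, htl]
        simp
      have hmlt : i + L < s.length := by omega
      have hEL : excess s (i + L) = e := by
        have h0 : excess u.bp L = 0 := by rw [hL]; exact excess_bp_len u
        rw [key L le_rfl, h0, add_zero]
      have hc : excess s (i + L + 1) = e - 1 := by
        have := excess_succ s (i + L) false hfalse
        simp at this
        rw [this, hEL]; ring
      obtain ⟨a, hmatch, hae⟩ := exists_match s (i + L) hmlt hfalse (by rw [hc]; linarith)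
      rw [hc] at hae
      have ha_lt : a < i := by
        by_contra hcon
        push_neg at hcon
        have ham : a < i + L := hmatch.1
        obtain ⟨m', hm'⟩ : ∃ m', a = i + m' := ⟨a - i, by omega⟩
        have hm'L : m' ≤ L := by omega
        have := key m' hm'L
        rw [← hm'] at this
        have hnn := excess_bp_nonneg u m'
        rw [this] at hae
        linarith
      have hvL : v < i + L := by omega
      have hjle : j ≤ i + L := hj.2 a (i + L) hmatch ha_lt hvL
      have hjge : i + L ≤ j := by
        by_contra hcon
        push_neg at hcon
        obtain ⟨i0, hm0, hi0, hv0'⟩ := hj.1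
        have hstrict := hm0.2.2.2.2.2 i hi0 (by omega)
        have hexc := hm0.2.2.2.2.1
        have hei : excess s i = e := rfl
        obtain ⟨m, hm⟩ : ∃ m, j + 1 = i + m := ⟨j + 1 - i, by omega⟩
        have hmL : m ≤ L := by omega
        have h1 := key m hmL
        rw [← hm] at h1
        have hnn := excess_bp_nonneg u m
        rw [hexc] at h1
        linarith
      have hji : j - i = u.bpL.length := by rw [bpL_length, ← hL]; omega
      rw [hbpL, hji]
      rw [List.append_assoc, List.drop_left' hXlen, List.take_left' rfl]
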